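/- arXiv:2109.06713 — 2 statements merged into one kernel-verified Lean document; each statement's English description precedes it below -/
import Mathlib

section
/- If the outflow rate of an edge satisfies the 'operating at capacity' condition, the queue length is always non-negative: suppose F⁺, F⁻ : ℝ≥0 → ℝ≥0 are absolutely continuous cumulative inflow and outflow with F⁻(θ) = 0 for θ < τ, and the outflow rate satisfies f⁻(θ + τ) = ν if q(θ) > 0 and f⁻(θ + τ) = min(f⁺(θ), ν) otherwise, where q(θ) := F⁺(θ) - F⁻(θ + τ). Then q(θ) ≥ 0 for all θ ≥ 0. -/
open MeasureTheory

/-- Operating at capacity implies non-negative queues: if the cumulative inflow/outflow are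
integrals of non-negative rates, the outflow vanishes before time `τ`, and the outflow rate
satisfies the operating-at-capacity condition, then the queue
`q(θ) = F⁺(θ) - F⁻(θ+τ)` is non-negative for all `θ ≥ 0`. -/
theorem queue_nonneg_of_operating_at_capacity (ν τ : ℝ) (hν : 0 < ν) (hτ : 0 < τ)
    (fplus fminus : ℝ → ℝ)
    (hfplus_nonneg : ∀ θ, 0 ≤ fplus θ) (hfminus_nonneg : ∀ θ, 0 ≤ fminus θ)
    (hfplus_int : LocallyIntegrable fplus) (hfminus_int : LocallyIntegrable fminus)
    (Fplus Fminus : ℝ → ℝ)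
    (hFplus : ∀ θ, Fplus θ = ∫ s in (0 : ℝ)..θ, fplus s)
    (hFminus : ∀ θ, Fminus θ = ∫ s in (0 : ℝ)..θ, fminus s)
    (hFminus_zero : ∀ θ, 0 ≤ θ → θ < τ → Fminus θ = 0)
    (hcap : ∀ᵐ θ, 0 ≤ θ →
      fminus (θ + τ) =
        if 0 < Fplus θ - Fminus (θ + τ) then ν else min (fplus θ) ν) :
    ∀ θ, 0 ≤ θ → 0 ≤ Fplus θ - Fminus (θ + τ) := by
  -- interval integrability
  have hip : ∀ a b : ℝ, IntervalIntegrable fplus volume a b := fun a b =>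
    (hfplus_int.integrableOn_isCompact isCompact_uIcc).intervalIntegrable
  have him : ∀ a b : ℝ, IntervalIntegrable fminus volume a b := fun a b =>
    (hfminus_int.integrableOn_isCompact isCompact_uIcc).intervalIntegrable
  -- the queue function
  set q : ℝ → ℝ := fun θ => Fplus θ - Fminus (θ + τ) with hq
  -- continuity
  have hFp_eq : Fplus = fun θ => ∫ s in (0:ℝ)..θ, fplus s := funext hFplus
  have hFm_eq : Fminus = fun θ => ∫ s in (0:ℝ)..θ, fminus s := funext hFminus
  have hFp_cont : Continuous Fplus := by
    rw [hFp_eq]; exact intervalIntegral.continuous_primitive hip 0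
  have hFm_cont : Continuous Fminus := by
    rw [hFm_eq]; exact intervalIntegral.continuous_primitive him 0
  have hq_cont : Continuous q :=
    hFp_cont.sub (hFm_cont.comp (continuous_id.add continuous_const))
  -- Fminus τ = 0 by continuity
  have hFmτ : Fminus τ = 0 := by
    have h1 : Filter.Tendsto Fminus (nhdsWithin τ (Set.Ioo 0 τ)) (nhds (Fminus τ)) :=
      (hFm_cont.tendsto τ).mono_left nhdsWithin_le_nhds
    have h2 : Filter.Tendsto Fminus (nhdsWithin τ (Set.Ioo 0 τ)) (nhds 0) := by
      apply Filter.Tendsto.congr' _ tendsto_const_nhds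
      filter_upwards [self_mem_nhdsWithin] with x hx
      exact (hFminus_zero x hx.1.le hx.2).symm
    have hne : (nhdsWithin τ (Set.Ioo 0 τ)).NeBot := by
      apply mem_closure_iff_nhdsWithin_neBot.mp
      rw [closure_Ioo hτ.ne]
      exact Set.right_mem_Icc.mpr hτ.le
    exact tendsto_nhds_unique h1 h2
  have hq0 : 0 ≤ q 0 := by
    simp only [hq]
    rw [hFplus 0, zero_add, hFmτ, intervalIntegral.integral_same]
    norm_num
  -- main argument by contradiction
  intro θ₀ hθ₀
  by_contra hneg
  push_neg at hneg
  -- set of "good" times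
  set S : Set ℝ := {s | s ∈ Set.Icc 0 θ₀ ∧ 0 ≤ q s} with hS
  have hS0 : (0:ℝ) ∈ S := ⟨⟨le_refl 0, hθ₀⟩, hq0⟩
  have hSne : S.Nonempty := ⟨0, hS0⟩
  have hSbdd : BddAbove S := ⟨θ₀, fun x hx => hx.1.2⟩
  set t := sSup S with ht
  have hSclosed : IsClosed S :=
    (isClosed_Icc.inter (isClosed_le continuous_const hq_cont) : IsClosed (Set.Icc 0 θ₀ ∩ {s | 0 ≤ q s}))
  have htS : t ∈ S := hSclosed.csSup_mem hSne hSbdd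
  have ht0 : 0 ≤ t := htS.1.1
  have htθ₀ : t ≤ θ₀ := htS.1.2
  have hqt : 0 ≤ q t := htS.2
  have htlt : t < θ₀ := lt_of_le_of_ne htθ₀ (fun heq => absurd hqt (by rw [heq]; exact not_le.mpr hneg))
  -- on (t, θ₀], q < 0
  have hqlt : ∀ s, t < s → s ≤ θ₀ → q s < 0 := by
    intro s hts hsθ₀
    by_contra h
    push_neg at h
    have : s ∈ S := ⟨⟨ht0.trans hts.le, hsθ₀⟩, h⟩
    exact absurd (le_csSup hSbdd this) (not_le.mpr hts)
  -- integral identity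
  have hid : q θ₀ - q t = ∫ s in t..θ₀, (fplus s - fminus (s + τ)) := by
    have h1 : Fplus θ₀ - Fplus t = ∫ s in t..θ₀, fplus s := by
      rw [hFplus θ₀, hFplus t, intervalIntegral.integral_interval_sub_left (hip 0 θ₀) (hip 0 t)]
    have h2 : Fminus (θ₀ + τ) - Fminus (t + τ) = ∫ s in t..θ₀, fminus (s + τ) := by
      rw [hFminus (θ₀ + τ), hFminus (t + τ),
        intervalIntegral.integral_interval_sub_left (him 0 (θ₀+τ)) (him 0 (t+τ)),
        intervalIntegral.integral_comp_add_right fminus τ]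
    rw [intervalIntegral.integral_sub (hip t θ₀)
      (by simpa using (him (t+τ) (θ₀+τ)).comp_add_right τ), ← h1, ← h2]
    simp only [hq]; ring
  -- a.e. nonnegativity of integrand on Ioc t θ₀
  have hnonneg : 0 ≤ ∫ s in t..θ₀, (fplus s - fminus (s + τ)) := by
    apply intervalIntegral.integral_nonneg_of_ae_restrict htlt.le
    have hne_t : ∀ᵐ s : ℝ, s ≠ t := by
      rw [MeasureTheory.ae_iff]
      simpa using measure_singleton t
    filter_upwards [ae_restrict_of_ae hcap, ae_restrict_mem measurableSet_Icc,
      ae_restrict_of_ae hne_t] with s hs hsmem hne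
    simp only [Pi.zero_apply]
    have hlt : t < s := lt_of_le_of_ne hsmem.1 (Ne.symm hne)
    have hcap' := hs (ht0.trans hsmem.1)
    have hq_neg : q s < 0 := hqlt s hlt hsmem.2
    have hnp : ¬ 0 < Fplus s - Fminus (s + τ) := by simp only [hq] at hq_neg; linarith
    rw [hcap', if_neg hnp]
    have : min (fplus s) ν ≤ fplus s := min_le_left _ _
    linarith
  have hfinal : 0 ≤ q θ₀ - q t := hid ▸ hnonneg
  simp only [hq] at hfinal hqt
  linarith
end

section
/- In the network with two parallel edges e₁ (τ=1, ν=1) and e₂ (τ=2, ν=2) from s to t with constant network inflow rate 2, no dynamic prediction equilibrium exists for the discontinuous predictor q̂(θ; θ̄; q) = q(θ̄) if q(θ̄) < 1 and q̂ = 2 otherwise. Specifically: in any feasible flow satisfying the equilibrium condition, during [0,1) all inflow enters e₁, so q_{e₁}(1) = 1; and for any ε > 0 there is no measurable inflow split on [1, 1+ε) such that flow only enters edges that are predicted-active. -/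
open MeasureTheory intervalIntegral Set

private lemma intInt_ite {f q : ℝ → ℝ} {c d C : ℝ} (a b : ℝ) (hfm : Measurable f)
    (hqc : Continuous q) (hC : 0 ≤ C)
    (hbd : ∀ s ∈ Set.uIoc a b, |f s - c| ≤ C) :
    IntervalIntegrable (fun s => if 0 < q s ∨ d < f s then f s - c else 0)
      MeasureTheory.volume a b := by
  have hset : MeasurableSet {s : ℝ | 0 < q s ∨ d < f s} :=
    (measurableSet_lt measurable_const hqc.measurable).union
      (measurableSet_lt measurable_const hfm)
  have hm : Measurable (fun s => if 0 < q s ∨ d < f s then f s - c else 0) :=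
    Measurable.ite hset (hfm.sub measurable_const) measurable_const
  refine (_root_.intervalIntegrable_const (c := C)).mono_fun' hm.aestronglyMeasurable ?_
  have hbnd : ∀ᵐ x ∂(MeasureTheory.volume.restrict (Set.uIoc a b)),
      ‖if 0 < q x ∨ d < f x then f x - c else 0‖ ≤ C := by
    rw [ae_restrict_iff' measurableSet_uIoc]
    refine Filter.Eventually.of_forall (fun s hs => ?_)
    simp only [Real.norm_eq_abs]
    split
    · exact hbd s hs
    · simpa using hC
  exact hbnd

/-- No dynamic prediction equilibrium exists for the discontinuous predictor
`q̂(θ;θ̄;q) = q(θ̄)` if `q(θ̄) < 1` and `q̂ = 2` otherwise, in the network with two parallel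
edges `e₁` (τ=1, ν=1) and `e₂` (τ=2, ν=2) and constant network inflow rate `2`:
in any feasible flow satisfying the equilibrium condition, on `[0,1)` all inflow enters
`e₁`, hence `q_{e₁}(1) = 1`, and no admissible inflow split can exist beyond time 1,
a contradiction. -/
theorem no_DPE_for_discontinuous_predictor (f1 f2 q1 q2 : ℝ → ℝ)
    (hf1m : Measurable f1) (hf2m : Measurable f2)
    (hq1c : Continuous q1) (hq2c : Continuous q2)
    (hf1 : ∀ θ, 0 ≤ θ → 0 ≤ f1 θ) (hf2 : ∀ θ, 0 ≤ θ → 0 ≤ f2 θ)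
    (hcons : ∀ θ, 0 ≤ θ → f1 θ + f2 θ = 2)
    (hq1 : ∀ θ, 0 ≤ θ →
      q1 θ = ∫ s in (0 : ℝ)..θ, (if 0 < q1 s ∨ 1 < f1 s then f1 s - 1 else 0))
    (hq2 : ∀ θ, 0 ≤ θ →
      q2 θ = ∫ s in (0 : ℝ)..θ, (if 0 < q2 s ∨ 2 < f2 s then f2 s - 2 else 0))
    (heq1 : ∀ θ, 0 ≤ θ → 0 < f1 θ →
      1 + (if q1 θ < 1 then q1 θ else 2) / 1 ≤ 2 + (if q2 θ < 1 then q2 θ else 2) / 2)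
    (heq2 : ∀ θ, 0 ≤ θ → 0 < f2 θ →
      2 + (if q2 θ < 1 then q2 θ else 2) / 2 ≤ 1 + (if q1 θ < 1 then q1 θ else 2) / 1) :
    (∀ θ ∈ Set.Ico (0 : ℝ) 1, f2 θ = 0) ∧ q1 1 = 1 ∧ False := by
  have hf2le : ∀ θ, 0 ≤ θ → f2 θ ≤ 2 := fun θ hθ => by
    have h1 := hcons θ hθ; have h2 := hf1 θ hθ; linarith
  have hf1le : ∀ θ, 0 ≤ θ → f1 θ ≤ 2 := fun θ hθ => by
    have h1 := hcons θ hθ; have h2 := hf2 θ hθ; linarith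
  -- integrability of both integrands on [a,b] ⊆ [0,∞)
  have hint1 : ∀ a b : ℝ, 0 ≤ a → a ≤ b →
      IntervalIntegrable (fun s => if 0 < q1 s ∨ 1 < f1 s then f1 s - 1 else 0)
        MeasureTheory.volume a b := by
    intro a b ha hab
    refine intInt_ite a b hf1m hq1c (by norm_num : (0:ℝ) ≤ 1) ?_
    intro s hs
    rw [Set.uIoc_of_le hab] at hs
    have hs0 : 0 ≤ s := le_trans ha (le_of_lt hs.1)
    have h1 := hf1 s hs0; have h2 := hf1le s hs0
    rw [abs_le]; constructor <;> linarith
  have hint2 : ∀ a b : ℝ, 0 ≤ a → a ≤ b →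
      IntervalIntegrable (fun s => if 0 < q2 s ∨ 2 < f2 s then f2 s - 2 else 0)
        MeasureTheory.volume a b := by
    intro a b ha hab
    refine intInt_ite a b hf2m hq2c (by norm_num : (0:ℝ) ≤ 2) ?_
    intro s hs
    rw [Set.uIoc_of_le hab] at hs
    have hs0 : 0 ≤ s := le_trans ha (le_of_lt hs.1)
    have h1 := hf2 s hs0; have h2 := hf2le s hs0
    rw [abs_le]; constructor <;> linarith
  -- q2 ≤ 0 everywhere on [0,∞)
  have hq2le : ∀ θ, 0 ≤ θ → q2 θ ≤ 0 := by
    intro θ hθ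
    rw [hq2 θ hθ]
    have hmono : (∫ s in (0:ℝ)..θ, (if 0 < q2 s ∨ 2 < f2 s then f2 s - 2 else 0))
        ≤ ∫ _s in (0:ℝ)..θ, (0:ℝ) := by
      refine intervalIntegral.integral_mono_on hθ (hint2 0 θ le_rfl hθ)
        intervalIntegrable_const ?_
      intro s hs
      have h2 := hf2le s hs.1
      split
      · linarith
      · norm_num
    simpa using hmono
  -- q2 = 0 everywhere on [0,∞)
  have hq2zero : ∀ θ, 0 ≤ θ → q2 θ = 0 := by
    intro θ hθ
    rw [hq2 θ hθ]
    rw [intervalIntegral.integral_congr (g := fun _ => (0:ℝ)) ?_]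
    · simp
    · intro s hs
      rw [Set.uIcc_of_le hθ] at hs
      have h1 := hq2le s hs.1
      have h2 := hf2le s hs.1
      simp only
      rw [if_neg]
      push_neg
      exact ⟨by linarith, by linarith⟩
  -- equilibrium consequences
  have h2pos : ∀ θ, 0 ≤ θ → 0 < f2 θ → 1 ≤ q1 θ := by
    intro θ hθ hf
    by_contra h; push_neg at h
    have key := heq2 θ hθ hf
    simp only [hq2zero θ hθ] at key
    rw [if_pos h] at key
    norm_num at key
    linarith
  have h1pos : ∀ θ, 0 ≤ θ → 0 < f1 θ → q1 θ < 1 := by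
    intro θ hθ hf
    by_contra h; push_neg at h
    have key := heq1 θ hθ hf
    simp only [hq2zero θ hθ] at key
    rw [if_neg (not_lt.mpr h)] at key
    norm_num at key
  -- q1 θ ≤ θ
  have hq1le : ∀ θ, 0 ≤ θ → q1 θ ≤ θ := by
    intro θ hθ
    rw [hq1 θ hθ]
    have hmono : (∫ s in (0:ℝ)..θ, (if 0 < q1 s ∨ 1 < f1 s then f1 s - 1 else 0))
        ≤ ∫ _s in (0:ℝ)..θ, (1:ℝ) := by
      refine intervalIntegral.integral_mono_on hθ (hint1 0 θ le_rfl hθ)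
        intervalIntegrable_const ?_
      intro s hs
      have h2 := hf1le s hs.1
      split
      · linarith
      · norm_num
    simpa using hmono
  -- part 1: no flow on e2 before time 1
  have part1 : ∀ θ ∈ Set.Ico (0:ℝ) 1, f2 θ = 0 := by
    intro θ hθ
    obtain ⟨h0, h1⟩ := hθ
    by_contra h
    have hpos : 0 < f2 θ := lt_of_le_of_ne (hf2 θ h0) (Ne.symm h)
    have hk1 := h2pos θ h0 hpos
    have hk2 := hq1le θ h0
    linarith
  -- q1 1 = 1
  have hae : ∀ᵐ x : ℝ, x ≠ (1:ℝ) := by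
    rw [MeasureTheory.ae_iff]
    simp only [Set.setOf_eq_eq_singleton, not_not, ne_eq]
    simp [Real.volume_singleton (a := (1:ℝ))]
  have hq1one : q1 1 = 1 := by
    rw [hq1 1 zero_le_one]
    rw [intervalIntegral.integral_congr_ae (g := fun _ => (1:ℝ)) ?_]
    · simp
    · filter_upwards [hae] with s hs hmem
      rw [Set.uIoc_of_le zero_le_one] at hmem
      have hs0 : 0 ≤ s := le_of_lt hmem.1
      have hs1 : s < 1 := lt_of_le_of_ne hmem.2 hs
      have hf2z := part1 s ⟨hs0, hs1⟩
      have hf1two : f1 s = 2 := by have := hcons s hs0; linarith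
      rw [if_pos (Or.inr (by rw [hf1two]; norm_num)), hf1two]
      norm_num
  -- value of the integrand after time 1
  have hg1val : ∀ s, 1 ≤ s →
      (if 0 < q1 s ∨ 1 < f1 s then f1 s - 1 else 0) = (if q1 s < 1 then 1 else -1) := by
    intro s hs
    have hs0 : (0:ℝ) ≤ s := le_trans zero_le_one hs
    by_cases h : q1 s < 1
    · have hf2z : f2 s = 0 := by
        by_contra hne
        have := h2pos s hs0 (lt_of_le_of_ne (hf2 s hs0) (Ne.symm hne))
        linarith
      have hf1two : f1 s = 2 := by have := hcons s hs0; linarith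
      rw [if_pos (Or.inr (by rw [hf1two]; norm_num)), if_pos h, hf1two]
      norm_num
    · push_neg at h
      have hf1z : f1 s = 0 := by
        by_contra hne
        have := h1pos s hs0 (lt_of_le_of_ne (hf1 s hs0) (Ne.symm hne))
        linarith
      rw [if_pos (Or.inl (by linarith : (0:ℝ) < q1 s)), if_neg (not_lt.mpr h), hf1z]
      norm_num
  -- splitting the integral
  have hsplit : ∀ a b : ℝ, 1 ≤ a → a ≤ b →
      q1 b = q1 a + ∫ s in a..b, (if 0 < q1 s ∨ 1 < f1 s then f1 s - 1 else 0) := by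
    intro a b ha hab
    have ha0 : (0:ℝ) ≤ a := le_trans zero_le_one ha
    have hb0 : (0:ℝ) ≤ b := le_trans ha0 hab
    rw [hq1 b hb0, hq1 a ha0]
    exact (intervalIntegral.integral_add_adjacent_intervals
      (hint1 0 a le_rfl ha0) (hint1 a b ha0 hab)).symm
  -- q1 ≤ 1 on [1,∞)
  have hub : ∀ b, 1 ≤ b → q1 b ≤ 1 := by
    intro b hb
    by_contra hgt; push_neg at hgt
    have hbne : 1 < b := by
      rcases eq_or_lt_of_le hb with h | h
      · rw [← h, hq1one] at hgt; linarith
      · exact h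
    set S := Set.Icc (1:ℝ) b ∩ {s | q1 s ≤ 1} with hSdef
    have hSne : S.Nonempty := ⟨1, ⟨le_rfl, le_of_lt hbne⟩, le_of_eq hq1one⟩
    have hSbdd : BddAbove S := ⟨b, fun s hs => hs.1.2⟩
    have hScl : IsClosed S := isClosed_Icc.inter (isClosed_le hq1c continuous_const)
    set a := sSup S with hadef
    have haS : a ∈ S := hScl.csSup_mem hSne hSbdd
    have ha1 : 1 ≤ a := haS.1.1
    have hab : a ≤ b := haS.1.2
    have haq : q1 a ≤ 1 := haS.2
    have hnab : a < b := lt_of_le_of_ne hab (by intro h; rw [h] at haq; linarith)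
    have hbetween : ∀ s, a < s → s ≤ b → 1 < q1 s := by
      intro s hs1 hs2
      by_contra hle; push_neg at hle
      have hmem : s ∈ S := ⟨⟨le_trans ha1 (le_of_lt hs1), hs2⟩, hle⟩
      have := le_csSup hSbdd hmem
      linarith
    have hkey := hsplit a b ha1 hab
    have hcalc : (∫ s in a..b, (if 0 < q1 s ∨ 1 < f1 s then f1 s - 1 else 0)) = a - b := by
      rw [intervalIntegral.integral_congr_ae (g := fun _ => (-1:ℝ))
        (Filter.Eventually.of_forall (fun s hmem => ?_))]
      · rw [intervalIntegral.integral_const, smul_eq_mul]; ring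
      · rw [Set.uIoc_of_le (le_of_lt hnab)] at hmem
        have hs1 : 1 ≤ s := le_trans ha1 (le_of_lt hmem.1)
        rw [hg1val s hs1, if_neg (not_lt.mpr (le_of_lt (hbetween s hmem.1 hmem.2)))]
    rw [hcalc] at hkey
    linarith
  -- q1 ≥ 1 on [1,∞)
  have hlb : ∀ b, 1 ≤ b → 1 ≤ q1 b := by
    intro b hb
    by_contra hlt; push_neg at hlt
    have hbne : 1 < b := by
      rcases eq_or_lt_of_le hb with h | h
      · rw [← h, hq1one] at hlt; linarith
      · exact h
    set S := Set.Icc (1:ℝ) b ∩ {s | 1 ≤ q1 s} with hSdef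
    have hSne : S.Nonempty := ⟨1, ⟨le_rfl, le_of_lt hbne⟩, ge_of_eq hq1one⟩
    have hSbdd : BddAbove S := ⟨b, fun s hs => hs.1.2⟩
    have hScl : IsClosed S := isClosed_Icc.inter (isClosed_le continuous_const hq1c)
    set a := sSup S with hadef
    have haS : a ∈ S := hScl.csSup_mem hSne hSbdd
    have ha1 : 1 ≤ a := haS.1.1
    have hab : a ≤ b := haS.1.2
    have haq : 1 ≤ q1 a := haS.2
    have hnab : a < b := lt_of_le_of_ne hab (by intro h; rw [h] at haq; linarith)
    have hbetween : ∀ s, a < s → s ≤ b → q1 s < 1 := by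
      intro s hs1 hs2
      by_contra hle; push_neg at hle
      have hmem : s ∈ S := ⟨⟨le_trans ha1 (le_of_lt hs1), hs2⟩, hle⟩
      have := le_csSup hSbdd hmem
      linarith
    have hkey := hsplit a b ha1 hab
    have hcalc : (∫ s in a..b, (if 0 < q1 s ∨ 1 < f1 s then f1 s - 1 else 0)) = b - a := by
      rw [intervalIntegral.integral_congr_ae (g := fun _ => (1:ℝ))
        (Filter.Eventually.of_forall (fun s hmem => ?_))]
      · rw [intervalIntegral.integral_const, smul_eq_mul]; ring
      · rw [Set.uIoc_of_le (le_of_lt hnab)] at hmem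
        have hs1 : 1 ≤ s := le_trans ha1 (le_of_lt hmem.1)
        rw [hg1val s hs1, if_pos (hbetween s hmem.1 hmem.2)]
    rw [hcalc] at hkey
    linarith
  -- final contradiction
  refine ⟨part1, hq1one, ?_⟩
  have h2eq : q1 2 = 1 := le_antisymm (hub 2 one_le_two) (hlb 2 one_le_two)
  have hkey := hsplit 1 2 le_rfl one_le_two
  have hcalc : (∫ s in (1:ℝ)..2, (if 0 < q1 s ∨ 1 < f1 s then f1 s - 1 else 0)) = -1 := by
    rw [intervalIntegral.integral_congr_ae (g := fun _ => (-1:ℝ))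
      (Filter.Eventually.of_forall (fun s hmem => ?_))]
    · rw [intervalIntegral.integral_const, smul_eq_mul]; ring
    · rw [Set.uIoc_of_le one_le_two] at hmem
      have hs1 : 1 ≤ s := le_of_lt hmem.1
      rw [hg1val s hs1, if_neg (not_lt.mpr (hlb s hs1))]
  rw [hcalc, hq1one, h2eq] at hkey
  linarith
end
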